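/- Let G be a finite group. Then G is a B-group if and only if m_{G,N} = 0 for every minimal (nontrivial) normal subgroup N of G. -/
import Mathlib


open scoped Classical Pointwise

noncomputable instance (G : Type*) [Group G] [Finite G] : Fintype (Subgroup G) :=
  Fintype.ofFinite _

/-- The Möbius function of the subgroup lattice of a finite group `G`, defined as the
matrix inverse of the zeta matrix whose `(K, D)` entry is `1` if `K ≤ D` and `0` otherwise. -/
noncomputable def subgroupMu (G : Type*) [Group G] [Finite G] :
    Matrix (Subgroup G) (Subgroup G) ℚ :=
  (Matrix.of fun K D : Subgroup G => if K ≤ D then (1 : ℚ) else 0)⁻¹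

/-- `m_{G,N} = (1/|G|) · Σ_{X ≤ G, XN = G} |X| · μ(X, G)`. -/
noncomputable def mGN (G : Type*) [Group G] [Finite G] (N : Subgroup G) : ℚ :=
  (1 / (Nat.card G : ℚ)) *
    ∑ X : Subgroup G,
      if (X : Set G) * (N : Set G) = (Set.univ : Set G)
      then (Nat.card X : ℚ) * subgroupMu G X ⊤ else 0

/-- A finite group `G` is a `B`-group if `m_{G,N} = 0` for every nontrivial normal
subgroup `N` of `G`. -/
def IsBGroup (G : Type*) [Group G] [Finite G] : Prop :=
  ∀ N : Subgroup G, N.Normal → N ≠ ⊥ → mGN G N = 0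

section Aux

variable {G : Type*} [Group G] [Finite G]

private lemma sum_regroup {α β M : Type*} [Fintype α] [Fintype β] [AddCommMonoid M]
    (g : α → β) (F : β → α → M) :
    (∑ X : α, F (g X) X) = ∑ b : β, ∑ X : α, if g X = b then F b X else 0 := by
  rw [Finset.sum_comm]
  refine Finset.sum_congr rfl fun X _ => ?_
  rw [Finset.sum_ite_eq Finset.univ (g X) (fun b => F b X)]
  simp

private lemma zeta_mul_mu (G : Type*) [Group G] [Finite G] :
    (Matrix.of fun K D : Subgroup G => if K ≤ D then (1 : ℚ) else 0) * subgroupMu G = 1 := by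
  set Z := (Matrix.of fun K D : Subgroup G => if K ≤ D then (1 : ℚ) else 0) with hZdef
  haveI : Finite (LinearExtension (Subgroup G)) := inferInstanceAs (Finite (Subgroup G))
  haveI : Fintype (LinearExtension (Subgroup G)) := Fintype.ofFinite _
  let e := monoEquivOfFin (LinearExtension (Subgroup G)) rfl
  let f : Subgroup G ≃ Fin (Fintype.card (LinearExtension (Subgroup G))) :=
    Equiv.ofBijective (fun X => e.symm (toLinearExtension X))
      ⟨fun a b h => by exact e.symm.injective h,
       fun i => ⟨(e i : LinearExtension (Subgroup G)),
         by show e.symm (toLinearExtension (e i)) = i; exact e.symm_apply_apply i⟩⟩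
  have hdet : Z.det = 1 := by
    rw [← Matrix.det_submatrix_equiv_self f.symm Z]
    have htri : (Z.submatrix f.symm f.symm).BlockTriangular id := by
      intro i j hij
      show (if (f.symm i : Subgroup G) ≤ f.symm j then (1:ℚ) else 0) = 0
      rw [if_neg]
      intro hle
      have : f (f.symm i) ≤ f (f.symm j) := by
        show e.symm (toLinearExtension (f.symm i)) ≤ e.symm (toLinearExtension (f.symm j))
        exact e.symm.le_iff_le.2 (toLinearExtension.monotone hle)
      rw [f.apply_symm_apply, f.apply_symm_apply] at this
      exact absurd hij (not_lt.2 this)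
    rw [Matrix.det_of_upperTriangular htri]
    refine Finset.prod_eq_one fun i _ => ?_
    show (if (f.symm i : Subgroup G) ≤ f.symm i then (1:ℚ) else 0) = 1
    simp
  have : Z * Z⁻¹ = 1 := Matrix.mul_nonsing_inv Z (by rw [hdet]; exact isUnit_one)
  exact this

private lemma mu_filter_sum (W : Subgroup G) :
    (∑ X : Subgroup G, if W ≤ X then subgroupMu G X ⊤ else 0)
      = if W = (⊤ : Subgroup G) then (1 : ℚ) else 0 := by
  have h := Matrix.ext_iff.2 (zeta_mul_mu G) W ⊤
  rw [Matrix.mul_apply, Matrix.one_apply] at h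
  simpa [ite_mul, one_mul, zero_mul] using h


private lemma mul_eq_univ_iff {X N : Subgroup G} [N.Normal] :
    (X : Set G) * (N : Set G) = (Set.univ : Set G) ↔ X ⊔ N = ⊤ := by
  rw [← Subgroup.mul_normal X N]
  constructor
  · intro h
    exact SetLike.coe_injective (h.trans (Subgroup.coe_top (G := G)).symm)
  · intro h
    rw [h, Subgroup.coe_top]

private lemma modular_iff {K Z : Subgroup G} [K.Normal] (hKZ : K ≤ Z) (X : Subgroup G) :
    Z ≤ X ⊔ K ↔ (X ⊓ Z) ⊔ K = Z := by
  constructor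
  · intro h
    refine le_antisymm (sup_le inf_le_right hKZ) ?_
    intro z hz
    have hz' : z ∈ ((X : Set G) * (K : Set G)) := by
      rw [← Subgroup.mul_normal X K]; exact h hz
    obtain ⟨x, hx, k, hk, rfl⟩ := hz'
    have hxZ : x ∈ Z := by
      have : (x * k) * k⁻¹ ∈ Z := mul_mem hz (inv_mem (hKZ hk))
      simpa using this
    exact mul_mem (Subgroup.mem_sup_left ⟨hx, hxZ⟩) (Subgroup.mem_sup_right hk)
  · intro h
    rw [← h]
    exact sup_le_sup_right inf_le_left K

private lemma card_inf_mul_card_sup (X K : Subgroup G) [K.Normal] :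
    Nat.card (X ⊓ K : Subgroup G) * Nat.card (X ⊔ K : Subgroup G)
      = Nat.card X * Nat.card K := by
  have e1 : Nat.card X = Nat.card (X ⧸ K.subgroupOf X) * Nat.card (K.subgroupOf X) :=
    Subgroup.card_eq_card_quotient_mul_card_subgroup _
  have e2 : Nat.card (X ⊔ K : Subgroup G)
      = Nat.card ((X ⊔ K : Subgroup G) ⧸ K.subgroupOf (X ⊔ K)) * Nat.card (K.subgroupOf (X ⊔ K)) :=
    Subgroup.card_eq_card_quotient_mul_card_subgroup _
  have equot : Nat.card (X ⧸ K.subgroupOf X)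
      = Nat.card ((X ⊔ K : Subgroup G) ⧸ K.subgroupOf (X ⊔ K)) :=
    Nat.card_congr (QuotientGroup.quotientInfEquivProdNormalQuotient X K).toEquiv
  have einf : Nat.card (K.subgroupOf X) = Nat.card (X ⊓ K : Subgroup G) := by
    rw [← Subgroup.inf_subgroupOf_right K X]
    have := Nat.card_congr (Subgroup.subgroupOfEquivOfLe (inf_le_right : K ⊓ X ≤ X)).toEquiv
    rw [this, inf_comm]
  have ek : Nat.card (K.subgroupOf (X ⊔ K)) = Nat.card K :=
    Nat.card_congr (Subgroup.subgroupOfEquivOfLe (le_sup_right : K ≤ X ⊔ K)).toEquiv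
  rw [e1, e2, equot, einf, ek]
  ring

private lemma inter_fiber_zero {Z : Subgroup G} (hZ : Z ≠ ⊤) (W : Subgroup G) :
    (∑ X : Subgroup G, if X ⊓ Z = W then subgroupMu G X ⊤ else 0) = 0 := by
  refine (wellFounded_gt (α := Subgroup G)).induction
    (C := fun W => (∑ X : Subgroup G, if X ⊓ Z = W then subgroupMu G X ⊤ else 0) = 0) W ?_
  intro W IH
  by_cases hWZ : W ≤ Z
  · have hWtop : W ≠ ⊤ := fun h => hZ (top_le_iff.1 (h ▸ hWZ))
    have h1 : (∑ X : Subgroup G, if W ≤ X then subgroupMu G X ⊤ else 0) = 0 := by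
      rw [mu_filter_sum, if_neg hWtop]
    have h2 : ∀ X : Subgroup G,
        (if W ≤ X then subgroupMu G X ⊤ else 0)
          = (if W ≤ X ⊓ Z then subgroupMu G X ⊤ else 0) := by
      intro X
      refine if_congr ?_ rfl rfl
      simp [le_inf_iff, hWZ]
    rw [Finset.sum_congr rfl (fun X _ => h2 X)] at h1
    rw [sum_regroup (fun X => X ⊓ Z)
      (fun b X => if W ≤ b then subgroupMu G X ⊤ else 0)] at h1
    have h3 : ∀ b : Subgroup G,
        (∑ X : Subgroup G, if X ⊓ Z = b then (if W ≤ b then subgroupMu G X ⊤ else 0) else 0)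
          = (if W ≤ b then (∑ X : Subgroup G, if X ⊓ Z = b then subgroupMu G X ⊤ else 0) else 0) := by
      intro b
      by_cases hb : W ≤ b <;> simp [hb]
    rw [Finset.sum_congr rfl (fun b _ => h3 b)] at h1
    rw [Finset.sum_eq_single W (fun b _ hb => ?_) (by simp)] at h1
    · rw [if_pos le_rfl] at h1
      exact h1
    · by_cases hWb : W ≤ b
      · rw [if_pos hWb, IH b (lt_of_le_of_ne hWb (Ne.symm hb))]
      · rw [if_neg hWb]
  · refine Finset.sum_eq_zero fun X _ => ?_
    rw [if_neg]
    intro h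
    exact hWZ (h ▸ inf_le_right)

private lemma lemA {K Z : Subgroup G} [K.Normal] (hKZ : K ≤ Z) (hZ : Z ≠ ⊤) :
    (∑ X : Subgroup G,
      if Z ≤ X ⊔ K then (Nat.card (X ⊓ K : Subgroup G) : ℚ) * subgroupMu G X ⊤ else 0) = 0 := by
  have h2 : ∀ X : Subgroup G,
      (if Z ≤ X ⊔ K then (Nat.card (X ⊓ K : Subgroup G) : ℚ) * subgroupMu G X ⊤ else 0)
        = (if (X ⊓ Z) ⊔ K = Z
            then (Nat.card ((X ⊓ Z) ⊓ K : Subgroup G) : ℚ) * subgroupMu G X ⊤ else 0) := by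
    intro X
    have hc : X ⊓ K = (X ⊓ Z) ⊓ K := by
      rw [inf_assoc, inf_eq_right.2 hKZ]
    refine if_congr (modular_iff hKZ X) (by rw [hc]) rfl
  rw [Finset.sum_congr rfl (fun X _ => h2 X)]
  rw [show (fun X : Subgroup G => if (X ⊓ Z) ⊔ K = Z
        then (Nat.card ((X ⊓ Z) ⊓ K : Subgroup G) : ℚ) * subgroupMu G X ⊤ else 0)
      = (fun X : Subgroup G => (fun b X' => if b ⊔ K = Z
        then (Nat.card (b ⊓ K : Subgroup G) : ℚ) * subgroupMu G X' ⊤ else 0) (X ⊓ Z) X) from rfl]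
  rw [sum_regroup (fun X => X ⊓ Z)
      (fun b X => if b ⊔ K = Z
        then (Nat.card (b ⊓ K : Subgroup G) : ℚ) * subgroupMu G X ⊤ else 0)]
  refine Finset.sum_eq_zero fun b _ => ?_
  by_cases hb : b ⊔ K = Z
  · simp only [hb, if_true]
    have : (∑ X : Subgroup G, if X ⊓ Z = b
        then (Nat.card (b ⊓ K : Subgroup G) : ℚ) * subgroupMu G X ⊤ else 0)
        = (Nat.card (b ⊓ K : Subgroup G) : ℚ) *
          (∑ X : Subgroup G, if X ⊓ Z = b then subgroupMu G X ⊤ else 0) := by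
      rw [Finset.mul_sum]
      refine Finset.sum_congr rfl fun X _ => ?_
      by_cases h : X ⊓ Z = b <;> simp [h]
    rw [this, inter_fiber_zero hZ b, mul_zero]
  · simp [hb]

private lemma E_top_zero {K : Subgroup G} [K.Normal] (hm : mGN G K = 0) :
    (∑ X : Subgroup G, if X ⊔ K = ⊤
      then (Nat.card (X ⊓ K : Subgroup G) : ℚ) * subgroupMu G X ⊤ else 0) = 0 := by
  have hGpos : 0 < Nat.card G := Nat.card_pos
  have hG : (Nat.card G : ℚ) ≠ 0 := by exact_mod_cast hGpos.ne'
  have hT : (∑ X : Subgroup G, if (X : Set G) * (K : Set G) = Set.univ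
      then (Nat.card X : ℚ) * subgroupMu G X ⊤ else 0) = 0 := by
    have h := hm
    unfold mGN at h
    rcases mul_eq_zero.1 h with h' | h'
    · exact absurd h' (by simp [hG])
    · exact h'
  have key : ∀ X : Subgroup G,
      (if X ⊔ K = ⊤ then (Nat.card (X ⊓ K : Subgroup G) : ℚ) * subgroupMu G X ⊤ else 0)
        = ((Nat.card K : ℚ) / (Nat.card G : ℚ)) *
          (if (X : Set G) * (K : Set G) = Set.univ
            then (Nat.card X : ℚ) * subgroupMu G X ⊤ else 0) := by
    intro X
    by_cases h : X ⊔ K = ⊤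
    · rw [if_pos h, if_pos (mul_eq_univ_iff.mpr h)]
      have hcard : (Nat.card (X ⊓ K : Subgroup G) : ℚ) * (Nat.card G : ℚ)
          = (Nat.card X : ℚ) * (Nat.card K : ℚ) := by
        have h2 := card_inf_mul_card_sup X K
        rw [h, Subgroup.card_top] at h2
        exact_mod_cast h2
      have h3 : (Nat.card (X ⊓ K : Subgroup G) : ℚ)
          = (Nat.card X : ℚ) * (Nat.card K : ℚ) / (Nat.card G : ℚ) := by
        rw [eq_div_iff hG]; exact hcard
      rw [h3]; ring
    · rw [if_neg h, if_neg (fun hc => h (mul_eq_univ_iff.mp hc)), mul_zero]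
  rw [Finset.sum_congr rfl (fun X _ => key X), ← Finset.mul_sum, hT, mul_zero]

private lemma E_zero {K : Subgroup G} [K.Normal] (hm : mGN G K = 0) (Z : Subgroup G) :
    (∑ X : Subgroup G, if X ⊔ K = Z
      then (Nat.card (X ⊓ K : Subgroup G) : ℚ) * subgroupMu G X ⊤ else 0) = 0 := by
  refine (wellFounded_gt (α := Subgroup G)).induction
    (C := fun Z => (∑ X : Subgroup G, if X ⊔ K = Z
      then (Nat.card (X ⊓ K : Subgroup G) : ℚ) * subgroupMu G X ⊤ else 0) = 0) Z ?_
  intro Z IH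
  by_cases hZtop : Z = ⊤
  · subst hZtop; exact E_top_zero hm
  by_cases hKZ : K ≤ Z
  · have hA := lemA hKZ hZtop
    have hA2 : (∑ b : Subgroup G, ∑ X : Subgroup G, if X ⊔ K = b
        then (if Z ≤ b then (Nat.card (X ⊓ K : Subgroup G) : ℚ) * subgroupMu G X ⊤ else 0)
        else 0) = 0 := by
      rw [← sum_regroup (fun X => X ⊔ K)
        (fun b X => if Z ≤ b then (Nat.card (X ⊓ K : Subgroup G) : ℚ) * subgroupMu G X ⊤ else 0)]
      exact hA
    have h3 : ∀ b : Subgroup G,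
        (∑ X : Subgroup G, if X ⊔ K = b
          then (if Z ≤ b then (Nat.card (X ⊓ K : Subgroup G) : ℚ) * subgroupMu G X ⊤ else 0)
          else 0)
        = (if Z ≤ b then (∑ X : Subgroup G, if X ⊔ K = b
            then (Nat.card (X ⊓ K : Subgroup G) : ℚ) * subgroupMu G X ⊤ else 0) else 0) := by
      intro b
      by_cases hb : Z ≤ b <;> simp [hb]
    rw [Finset.sum_congr rfl (fun b _ => h3 b)] at hA2
    rw [Finset.sum_eq_single Z (fun b _ hb => ?_) (by simp)] at hA2
    · rw [if_pos le_rfl] at hA2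
      exact hA2
    · by_cases hZb : Z ≤ b
      · rw [if_pos hZb, IH b (lt_of_le_of_ne hZb (Ne.symm hb))]
      · rw [if_neg hZb]
  · refine Finset.sum_eq_zero fun X _ => ?_
    rw [if_neg]
    intro h
    exact hKZ (h ▸ le_sup_right)
end Aux

/-- `G` is a `B`-group iff `m_{G,N} = 0` for every minimal (nontrivial) normal subgroup
`N` of `G`. -/
theorem isBGroup_iff_minimal_normal (G : Type*) [Group G] [Finite G] :
    IsBGroup G ↔
      ∀ N : Subgroup G, N.Normal → N ≠ ⊥ →
        (∀ K : Subgroup G, K.Normal → K ≤ N → K ≠ ⊥ → K = N) → mGN G N = 0 := by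
  constructor
  · intro hB N hN hNbot _
    exact hB N hN hNbot
  · intro h N hN hNbot
    obtain ⟨K, hKS, hmin⟩ := (wellFounded_lt (α := Subgroup G)).has_min
      {K : Subgroup G | K.Normal ∧ K ≤ N ∧ K ≠ ⊥} ⟨N, hN, le_rfl, hNbot⟩
    obtain ⟨hKnorm, hKN, hKbot⟩ := hKS
    haveI := hKnorm
    haveI := hN
    have hmK : mGN G K = 0 := by
      refine h K hKnorm hKbot ?_
      intro K' h1 h2 h3
      have hK'S : K' ∈ {K : Subgroup G | K.Normal ∧ K ≤ N ∧ K ≠ ⊥} :=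
        ⟨h1, h2.trans hKN, h3⟩
      rcases h2.lt_or_eq with hlt | heq
      · exact absurd hlt (hmin K' hK'S)
      · exact heq
    have hKpos : 0 < Nat.card K := Nat.card_pos
    have hK0 : (Nat.card K : ℚ) ≠ 0 := by exact_mod_cast hKpos.ne'
    unfold mGN
    rw [mul_eq_zero]
    right
    have key : ∀ X : Subgroup G,
        (if (X : Set G) * (N : Set G) = Set.univ
          then (Nat.card X : ℚ) * subgroupMu G X ⊤ else 0)
        = (if (X ⊔ K) ⊔ N = ⊤
            then ((Nat.card (X ⊔ K : Subgroup G) : ℚ) / (Nat.card K : ℚ)) *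
              ((Nat.card (X ⊓ K : Subgroup G) : ℚ) * subgroupMu G X ⊤) else 0) := by
      intro X
      have hcond : ((X : Set G) * (N : Set G) = Set.univ) ↔ ((X ⊔ K) ⊔ N = ⊤) := by
        rw [mul_eq_univ_iff, sup_assoc, sup_eq_right.mpr hKN]
      have hval : (Nat.card X : ℚ)
          = ((Nat.card (X ⊔ K : Subgroup G) : ℚ) / (Nat.card K : ℚ)) *
            (Nat.card (X ⊓ K : Subgroup G) : ℚ) := by
        have h2 := card_inf_mul_card_sup X K
        have h3 : (Nat.card (X ⊓ K : Subgroup G) : ℚ) * (Nat.card (X ⊔ K : Subgroup G) : ℚ)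
            = (Nat.card X : ℚ) * (Nat.card K : ℚ) := by exact_mod_cast h2
        rw [div_mul_eq_mul_div, eq_div_iff hK0]
        linarith [h3]
      by_cases hc : (X : Set G) * (N : Set G) = Set.univ
      · rw [if_pos hc, if_pos (hcond.mp hc), hval]; ring
      · rw [if_neg hc, if_neg (fun hc' => hc (hcond.mpr hc'))]
    rw [Finset.sum_congr rfl (fun X _ => key X)]
    have hre : (∑ X : Subgroup G, if (X ⊔ K) ⊔ N = ⊤
        then ((Nat.card (X ⊔ K : Subgroup G) : ℚ) / (Nat.card K : ℚ)) *
          ((Nat.card (X ⊓ K : Subgroup G) : ℚ) * subgroupMu G X ⊤) else 0)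
        = ∑ b : Subgroup G, ∑ X : Subgroup G, if X ⊔ K = b
            then (if b ⊔ N = ⊤
              then ((Nat.card (b : Subgroup G) : ℚ) / (Nat.card K : ℚ)) *
                ((Nat.card (X ⊓ K : Subgroup G) : ℚ) * subgroupMu G X ⊤) else 0) else 0 := by
      rw [← sum_regroup (fun X => X ⊔ K)
        (fun b X => if b ⊔ N = ⊤
          then ((Nat.card (b : Subgroup G) : ℚ) / (Nat.card K : ℚ)) *
            ((Nat.card (X ⊓ K : Subgroup G) : ℚ) * subgroupMu G X ⊤) else 0)]
    rw [hre]
    refine Finset.sum_eq_zero fun b _ => ?_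
    by_cases hb : b ⊔ N = ⊤
    · have hpull : (∑ X : Subgroup G, if X ⊔ K = b
          then (if b ⊔ N = ⊤
            then ((Nat.card (b : Subgroup G) : ℚ) / (Nat.card K : ℚ)) *
              ((Nat.card (X ⊓ K : Subgroup G) : ℚ) * subgroupMu G X ⊤) else 0) else 0)
          = ((Nat.card (b : Subgroup G) : ℚ) / (Nat.card K : ℚ)) *
            (∑ X : Subgroup G, if X ⊔ K = b
              then (Nat.card (X ⊓ K : Subgroup G) : ℚ) * subgroupMu G X ⊤ else 0) := by
        rw [Finset.mul_sum]
        refine Finset.sum_congr rfl fun X _ => ?_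
        by_cases h : X ⊔ K = b <;> simp [h, hb]
      rw [hpull, E_zero hmK b, mul_zero]
    · refine Finset.sum_eq_zero fun X _ => ?_
      by_cases h : X ⊔ K = b <;> simp [h, hb]
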